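/- Let T ∈ R_α(Q) be Schurian and let ψ be a one-parameter subgroup of Gl_α with ψ(t)∗T = t.T for all t ∈ ℂ*. Then: (1) for every M ∈ Att(T) and every g ∈ U_ψ, g∗M ∈ Att(T); (2) for g ∈ Gl_α, one has g∗T ∈ Att(T) if and only if g ∈ U_ψ; and (3) if ψ is in standard form, say ψ_q(t) = diag(t^{a_{1,q}},…,t^{a_{α_q,q}}) for each q, then for every M ∈ Att(T), every arrow a ∈ Q_1 and all indices i,j with (T_a)_{i,j} ≠ 0, one has (M_a)_{i,j} = (T_a)_{i,j}. -/

import Mathlib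

open Filter
open scoped Topology

namespace QuivC

variable {V A : Type} [Fintype V] [Fintype A] (s t : A → V) (α : V → ℕ) (γ : A → ℤ)

/-- The representation variety `R_α(Q) = ⊕_a Mat_{α_{t(a)} × α_{s(a)}}(ℂ)`. -/
abbrev RA : Type := ∀ a : A, Matrix (Fin (α (t a))) (Fin (α (s a))) ℂ

/-- The base change group `Gl_α = ∏_q GL_{α_q}(ℂ)`. -/
abbrev GLa : Type := ∀ q : V, GL (Fin (α q)) ℂ

/-- Base change action: `(g∗M)_a = g_{t(a)} M_a g_{s(a)}^{-1}`. -/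
noncomputable def bc (g : GLa α) (M : RA s t α) : RA s t α :=
  fun a => (g (t a) : Matrix (Fin (α (t a))) (Fin (α (t a))) ℂ) * M a *
    (((g (s a))⁻¹ : GL (Fin (α (s a))) ℂ) : Matrix (Fin (α (s a))) (Fin (α (s a))) ℂ)

/-- A one-parameter subgroup of `Gl_α`, given by the data of conjugating matrices
`h_q` and integer exponents: `ψ_q(z) = h_q · diag(z^{e_{q,i}}) · h_q^{-1}`. -/
structure OneParam (α : V → ℕ) where
  h : ∀ q, GL (Fin (α q)) ℂ
  e : ∀ q, Fin (α q) → ℤ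

/-- The value `ψ_q(z)` of a one-parameter subgroup (a matrix; invertible for `z ≠ 0`). -/
noncomputable def OneParam.val {α : V → ℕ} (ψ : OneParam α) (z : ℂ) (q : V) :
    Matrix (Fin (α q)) (Fin (α q)) ℂ :=
  (ψ.h q : Matrix _ _ ℂ) * Matrix.diagonal (fun i => z ^ (ψ.e q i)) *
    (((ψ.h q)⁻¹ : GL (Fin (α q)) ℂ) : Matrix _ _ ℂ)

/-- The action of `ψ̂(z) = (ψ(z), z^n) ∈ Ĝ_α` on `R_α(Q)`:
`(ψ̂(z).M)_a = (z^n)^{-γ_a} ψ(z)_{t(a)} M_a ψ(z)_{s(a)}^{-1}`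
(for `z ≠ 0` one has `ψ(z)^{-1} = ψ(z⁻¹)`). -/
noncomputable def hatAct (ψ : OneParam α) (n : ℤ) (z : ℂ) (M : RA s t α) : RA s t α :=
  fun a => ((z ^ n) ^ (-(γ a))) • (ψ.val z (t a) * M a * ψ.val z⁻¹ (s a))

end QuivC


namespace QuivC

open Filter
open scoped Topology

variable {V A : Type} [Fintype V] [Fintype A] (s t : A → V) (α : V → ℕ) (γ : A → ℤ)

/-- `T ∈ R_α(Q)` is Schurian: every intertwining tuple of matrices is scalar. -/
def Schurian (T : RA s t α) : Prop :=
  ∀ φ : ∀ q, Matrix (Fin (α q)) (Fin (α q)) ℂ,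
    (∀ a, φ (t a) * T a = T a * φ (s a)) →
    ∃ c : ℂ, ∀ q, φ q = c • (1 : Matrix (Fin (α q)) (Fin (α q)) ℂ)

/-- The subgroup `U_ψ = {g : lim_{z→0} ψ_q(z) g_q ψ_q(z)^{-1} = μ·Id for all q,
for some μ ∈ ℂ*}`. -/
def Upsi (ψ : OneParam α) : Set (GLa α) :=
  {g | ∃ μ : ℂ, μ ≠ 0 ∧ ∀ q,
    Tendsto (fun z : ℂ => ψ.val z q * (g q : Matrix _ _ ℂ) * ψ.val z⁻¹ q)
      (𝓝[≠] 0) (𝓝 (μ • (1 : Matrix (Fin (α q)) (Fin (α q)) ℂ)))}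

/-- The action of the pair `(ψ(z), z)`:
`((ψ(z),z).M)_a = z^{-γ_a} ψ(z)_{t(a)} M_a ψ(z)_{s(a)}^{-1}`. -/
noncomputable def attAct (ψ : OneParam α) (z : ℂ) (M : RA s t α) : RA s t α :=
  fun a => (z ^ (-(γ a))) • (ψ.val z (t a) * M a * ψ.val z⁻¹ (s a))

/-- The lifted attracting set `Att(T) = {M : lim_{z→0} (ψ(z),z).M = T}`. -/
def Att (ψ : OneParam α) (T : RA s t α) : Set (RA s t α) :=
  {M | Tendsto (fun z : ℂ => attAct s t α γ ψ z M) (𝓝[≠] 0) (𝓝 T)}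

/-- `ψ(z)∗T = z.T` for all `z ∈ ℂ*`: `T` is a lift of a torus fixed point with
associated one-parameter subgroup `ψ`. -/
def FixedLift (ψ : OneParam α) (T : RA s t α) : Prop :=
  ∀ z : ℂ, z ≠ 0 → ∀ a, ψ.val z (t a) * T a * ψ.val z⁻¹ (s a) = (z ^ (γ a)) • T a

/-- `ψ` is in standard form: each `ψ_q(z)` is the diagonal matrix
`diag(z^{e_{q,i}})`. -/
def StdForm (ψ : OneParam α) : Prop :=
  ∀ (z : ℂ) (q : V), ψ.val z q = Matrix.diagonal (fun i => z ^ (ψ.e q i))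

end QuivC


namespace QuivC

open Filter
open scoped Topology

set_option linter.unusedSectionVars false
set_option maxHeartbeats 1000000

section Helpers

variable {V A : Type} [Fintype V] [Fintype A] {α : V → ℕ}

lemma OneParam.val_inv_mul (ψ : OneParam α) {z : ℂ} (hz : z ≠ 0) (q : V) :
    ψ.val z⁻¹ q * ψ.val z q = 1 := by
  have h1 : (((ψ.h q)⁻¹ : GL (Fin (α q)) ℂ) : Matrix (Fin (α q)) (Fin (α q)) ℂ) *
      ((ψ.h q : GL (Fin (α q)) ℂ) : Matrix (Fin (α q)) (Fin (α q)) ℂ) = 1 := by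
    rw [← Units.val_mul, inv_mul_cancel, Units.val_one]
  have h3 : ((ψ.h q : GL (Fin (α q)) ℂ) : Matrix (Fin (α q)) (Fin (α q)) ℂ) *
      (((ψ.h q)⁻¹ : GL (Fin (α q)) ℂ) : Matrix (Fin (α q)) (Fin (α q)) ℂ) = 1 := by
    rw [← Units.val_mul, mul_inv_cancel, Units.val_one]
  have h2 : Matrix.diagonal (fun i => (z⁻¹) ^ (ψ.e q i)) *
      Matrix.diagonal (fun i => z ^ (ψ.e q i)) = (1 : Matrix (Fin (α q)) (Fin (α q)) ℂ) := by
    rw [Matrix.diagonal_mul_diagonal]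
    convert Matrix.diagonal_one with i
    rw [inv_zpow, inv_mul_cancel₀ (zpow_ne_zero _ hz)]
  unfold OneParam.val
  simp only [mul_assoc]
  rw [← mul_assoc (((ψ.h q)⁻¹ : GL (Fin (α q)) ℂ) : Matrix (Fin (α q)) (Fin (α q)) ℂ)
    ((ψ.h q : GL (Fin (α q)) ℂ) : Matrix (Fin (α q)) (Fin (α q)) ℂ), h1, one_mul,
    ← mul_assoc (Matrix.diagonal fun i => (z⁻¹) ^ (ψ.e q i))
    (Matrix.diagonal fun i => z ^ (ψ.e q i)), h2, one_mul, h3]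

lemma OneParam.mul_val_inv (ψ : OneParam α) {z : ℂ} (hz : z ≠ 0) (q : V) :
    ψ.val z q * ψ.val z⁻¹ q = 1 := by
  have := ψ.val_inv_mul (inv_ne_zero hz) q
  rwa [inv_inv] at this

lemma tendsto_laurent {n m : Type} [Fintype n] [Fintype m] (K : Finset ℤ) (mm : ℤ) (hm : mm ∈ K)
    (hK : ∀ k ∈ K, mm ≤ k) (C : ℤ → Matrix n m ℂ) :
    Tendsto (fun z : ℂ => ∑ k ∈ K, z ^ (k - mm).toNat • C k) (𝓝[≠] (0:ℂ)) (𝓝 (C mm)) := by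
  have hcont : Continuous (fun z : ℂ => ∑ k ∈ K, z ^ (k - mm).toNat • C k) :=
    continuous_finset_sum _ fun k _ => (continuous_pow _).smul continuous_const
  have hval : ∑ k ∈ K, (0:ℂ) ^ (k - mm).toNat • C k = C mm := by
    rw [Finset.sum_eq_single mm]
    · simp
    · intro k hk hne
      have := hK k hk
      rw [zero_pow (by omega), zero_smul]
    · intro h; exact absurd hm h
  have := hcont.tendsto 0
  rw [hval] at this
  exact this.mono_left nhdsWithin_le_nhds

lemma tendsto_of_laurent_eq {n m : Type} [Fintype n] [Fintype m] {f : ℂ → Matrix n m ℂ}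
    (K : Finset ℤ) (mm : ℤ) (hm : mm ∈ K) (hK : ∀ k ∈ K, mm ≤ k) (C : ℤ → Matrix n m ℂ)
    (hf : ∀ z : ℂ, z ≠ 0 → f z = ∑ k ∈ K, z ^ k • C k) :
    Tendsto (fun z : ℂ => z ^ (-mm) • f z) (𝓝[≠] (0:ℂ)) (𝓝 (C mm)) := by
  refine (tendsto_laurent K mm hm hK C).congr' ?_
  filter_upwards [self_mem_nhdsWithin] with z hz
  rw [hf z hz, Finset.smul_sum]
  refine Finset.sum_congr rfl fun k hk => ?_
  rw [smul_smul]
  congr 1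
  rw [← zpow_natCast, Int.toNat_of_nonneg (by linarith [hK k hk] : (0:ℤ) ≤ k - mm),
    ← zpow_add₀ hz]
  ring_nf

/-- The matrix `B_q = h_q⁻¹ g_q h_q`. -/
noncomputable def Bmat (ψ : OneParam α) (g : GLa α) (q : V) :
    Matrix (Fin (α q)) (Fin (α q)) ℂ :=
  (((ψ.h q)⁻¹ : GL (Fin (α q)) ℂ) : Matrix _ _ ℂ) * ((g q : GL (Fin (α q)) ℂ) : Matrix _ _ ℂ) *
    ((ψ.h q : GL (Fin (α q)) ℂ) : Matrix _ _ ℂ)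

/-- The weight-`k` part of `g`, conjugated back: `P_q^{(k)} = h_q B_q^{(k)} h_q⁻¹`. -/
noncomputable def Pmat (ψ : OneParam α) (g : GLa α) (q : V) (k : ℤ) :
    Matrix (Fin (α q)) (Fin (α q)) ℂ :=
  ((ψ.h q : GL (Fin (α q)) ℂ) : Matrix _ _ ℂ) *
    Matrix.of (fun i j => if ψ.e q i - ψ.e q j = k then Bmat ψ g q i j else 0) *
    (((ψ.h q)⁻¹ : GL (Fin (α q)) ℂ) : Matrix _ _ ℂ)

lemma diag_conj_expand {n : ℕ} (e : Fin n → ℤ) (B : Matrix (Fin n) (Fin n) ℂ)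
    (K : Finset ℤ) (hKmem : ∀ i j, B i j ≠ 0 → e i - e j ∈ K) {z : ℂ} (hz : z ≠ 0) :
    Matrix.diagonal (fun i => z ^ e i) * B * Matrix.diagonal (fun i => (z⁻¹) ^ e i) =
      ∑ k ∈ K, z ^ k • Matrix.of (fun i j => if e i - e j = k then B i j else 0) := by
  ext i j
  rw [Matrix.mul_diagonal, Matrix.diagonal_mul, Matrix.sum_apply]
  simp only [Matrix.smul_apply, Matrix.of_apply, smul_eq_mul, mul_ite, mul_zero]
  rw [Finset.sum_ite_eq K (e i - e j) (fun k => z ^ k * B i j)]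
  by_cases hB : B i j = 0
  · simp [hB]
  · rw [if_pos (hKmem i j hB), inv_zpow, ← zpow_neg, mul_comm (z ^ e i) (B i j), mul_assoc,
      ← zpow_add₀ hz, ← sub_eq_add_neg, mul_comm]

lemma F_expand (ψ : OneParam α) (g : GLa α) (q : V) (K : Finset ℤ)
    (hKmem : ∀ i j, Bmat ψ g q i j ≠ 0 → ψ.e q i - ψ.e q j ∈ K) {z : ℂ} (hz : z ≠ 0) :
    ψ.val z q * ((g q : GL (Fin (α q)) ℂ) : Matrix _ _ ℂ) * ψ.val z⁻¹ q
      = ∑ k ∈ K, z ^ k • Pmat ψ g q k := by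
  have h3 : ((ψ.h q : GL (Fin (α q)) ℂ) : Matrix (Fin (α q)) (Fin (α q)) ℂ) *
      (((ψ.h q)⁻¹ : GL (Fin (α q)) ℂ) : Matrix (Fin (α q)) (Fin (α q)) ℂ) = 1 := by
    rw [← Units.val_mul, mul_inv_cancel, Units.val_one]
  have key : ψ.val z q * ((g q : GL (Fin (α q)) ℂ) : Matrix _ _ ℂ) * ψ.val z⁻¹ q
      = ((ψ.h q : GL (Fin (α q)) ℂ) : Matrix _ _ ℂ) *
        (Matrix.diagonal (fun i => z ^ ψ.e q i) * Bmat ψ g q *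
          Matrix.diagonal (fun i => (z⁻¹) ^ ψ.e q i)) *
        (((ψ.h q)⁻¹ : GL (Fin (α q)) ℂ) : Matrix _ _ ℂ) := by
    unfold OneParam.val Bmat
    simp only [mul_assoc]
  rw [key, diag_conj_expand (ψ.e q) (Bmat ψ g q) K hKmem hz, Finset.mul_sum, Finset.sum_mul]
  refine Finset.sum_congr rfl fun k _ => ?_
  rw [mul_smul_comm, smul_mul_assoc]
  rfl

end Helpers


section Main

variable {V A : Type} [Fintype V] [Fintype A]

lemma Tendsto.matrix_mul {X : Type*} {l : Filter X} {n m p : Type}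
    [Fintype n] [Fintype m] [Fintype p]
    {f : X → Matrix n m ℂ} {g : X → Matrix m p ℂ} {F : Matrix n m ℂ} {G : Matrix m p ℂ}
    (hf : Tendsto f l (𝓝 F)) (hg : Tendsto g l (𝓝 G)) :
    Tendsto (fun x => f x * g x) l (𝓝 (F * G)) := by
  have hcont : Continuous (fun q : Matrix n m ℂ × Matrix m p ℂ => q.1 * q.2) :=
    continuous_fst.matrix_mul continuous_snd
  have h2 : Tendsto (fun x => (f x, g x)) l (𝓝 (F, G)) := hf.prodMk_nhds hg
  have h3 := (hcont.tendsto (F, G)).comp h2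
  exact h3

lemma hfix_cons (s t : A → V) (α : V → ℕ) (γ : A → ℤ) (T : RA s t α)
    (ψ : OneParam α) (hfix : FixedLift s t α γ ψ T) {z : ℂ} (hz : z ≠ 0) (a : A) :
    ψ.val z⁻¹ (t a) * T a = (z ^ (-(γ a))) • (T a * ψ.val z⁻¹ (s a)) := by
  have h := hfix z hz a
  have h2 : T a * ψ.val z⁻¹ (s a) = (z ^ (γ a)) • (ψ.val z⁻¹ (t a) * T a) := by
    calc T a * ψ.val z⁻¹ (s a)
        = (ψ.val z⁻¹ (t a) * ψ.val z (t a)) * T a * ψ.val z⁻¹ (s a) := by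
          rw [ψ.val_inv_mul hz, Matrix.one_mul]
      _ = ψ.val z⁻¹ (t a) * (ψ.val z (t a) * T a * ψ.val z⁻¹ (s a)) := by
          simp only [Matrix.mul_assoc]
      _ = ψ.val z⁻¹ (t a) * ((z ^ (γ a)) • T a) := by rw [h]
      _ = (z ^ (γ a)) • (ψ.val z⁻¹ (t a) * T a) := by rw [Matrix.mul_smul]
  rw [h2, smul_smul, ← zpow_add₀ hz, neg_add_cancel, zpow_zero, one_smul]

lemma upsi_of_bc_mem_att (s t : A → V) (α : V → ℕ) (γ : A → ℤ)
    (T : RA s t α) (hT : Schurian s t α T) (ψ : OneParam α) (hfix : FixedLift s t α γ ψ T)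
    (g : GLa α) (hg : bc s t α g T ∈ Att s t α γ ψ T) : g ∈ Upsi α ψ := by
  classical
  -- the set of weights appearing in g
  set K : Finset ℤ := Finset.univ.biUnion (fun q : V =>
    (Finset.univ.filter (fun p : Fin (α q) × Fin (α q) => Bmat ψ g q p.1 p.2 ≠ 0)).image
      (fun p => ψ.e q p.1 - ψ.e q p.2)) with hKdef
  have hKmem : ∀ q i j, Bmat ψ g q i j ≠ 0 → ψ.e q i - ψ.e q j ∈ K := by
    intro q i j hB
    rw [hKdef, Finset.mem_biUnion]
    exact ⟨q, Finset.mem_univ q, Finset.mem_image.mpr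
      ⟨(i, j), Finset.mem_filter.mpr ⟨Finset.mem_univ _, hB⟩, rfl⟩⟩
  by_cases hKne : K.Nonempty
  swap
  · -- K empty: all B q vanish, so all Fin (α q) empty
    rw [Finset.not_nonempty_iff_eq_empty] at hKne
    refine ⟨1, one_ne_zero, fun q => ?_⟩
    rcases isEmpty_or_nonempty (Fin (α q)) with hq | hq
    · have hsub : Subsingleton (Matrix (Fin (α q)) (Fin (α q)) ℂ) :=
        Matrix.subsingleton_of_empty_left
      have heq : (fun z : ℂ => ψ.val z q * ((g q : GL (Fin (α q)) ℂ) : Matrix _ _ ℂ) *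
          ψ.val z⁻¹ q) = fun _ => (1:ℂ) • 1 := by
        funext z; exact Subsingleton.elim _ _
      rw [heq]
      exact tendsto_const_nhds
    · exfalso
      obtain ⟨i⟩ := hq
      have hB0 : Bmat ψ g q = 0 := by
        ext i' j'
        by_contra hB
        have := hKmem q i' j' hB
        rw [hKne] at this
        exact absurd this (Finset.notMem_empty _)
      have hunit : Bmat ψ g q = (((ψ.h q)⁻¹ * g q * ψ.h q : GL (Fin (α q)) ℂ) :
          Matrix (Fin (α q)) (Fin (α q)) ℂ) := by
        unfold Bmat; rw [Units.val_mul, Units.val_mul]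
      have h1 : (1 : Matrix (Fin (α q)) (Fin (α q)) ℂ) = 0 := by
        have := Units.inv_mul ((ψ.h q)⁻¹ * g q * ψ.h q : GL (Fin (α q)) ℂ)
        rw [← hunit, hB0, mul_zero] at this
        exact this.symm
      have h2 : (1 : Matrix (Fin (α q)) (Fin (α q)) ℂ) i i = 0 := by rw [h1]; rfl
      rw [Matrix.one_apply_eq] at h2
      exact one_ne_zero h2
  -- K nonempty: let mm be the minimal weight
  set mm := K.min' hKne with hmmdef
  have hmK : mm ∈ K := K.min'_mem hKne
  have hKm : ∀ k ∈ K, mm ≤ k := fun k hk => K.min'_le k hk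
  -- each F q, rescaled by z^(-mm), converges to Pmat ψ g q mm
  have hFq : ∀ q, Tendsto (fun z : ℂ => z ^ (-mm) •
      (ψ.val z q * ((g q : GL (Fin (α q)) ℂ) : Matrix _ _ ℂ) * ψ.val z⁻¹ q))
      (𝓝[≠] (0:ℂ)) (𝓝 (Pmat ψ g q mm)) := fun q =>
    tendsto_of_laurent_eq K mm hmK hKm (Pmat ψ g q)
      (fun z hz => F_expand ψ g q K (hKmem q) hz)
  -- key algebraic identity
  have hid : ∀ (z : ℂ), z ≠ 0 → ∀ a,
      (z ^ (-mm) • (ψ.val z (t a) * ((g (t a) : GL _ ℂ) : Matrix _ _ ℂ) * ψ.val z⁻¹ (t a)))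
        * T a
      = attAct s t α γ ψ z (bc s t α g T) a *
        (z ^ (-mm) • (ψ.val z (s a) * ((g (s a) : GL _ ℂ) : Matrix _ _ ℂ) * ψ.val z⁻¹ (s a))) := by
    intro z hz a
    have hcons := hfix_cons s t α γ T ψ hfix hz a
    have hginv : (((g (s a))⁻¹ : GL (Fin (α (s a))) ℂ) : Matrix (Fin (α (s a))) (Fin (α (s a))) ℂ) *
        ((g (s a) : GL (Fin (α (s a))) ℂ) : Matrix (Fin (α (s a))) (Fin (α (s a))) ℂ) = 1 := by
      rw [← Units.val_mul, inv_mul_cancel, Units.val_one]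
    have lhs_eq : (z ^ (-mm) • (ψ.val z (t a) *
          ((g (t a) : GL (Fin (α (t a))) ℂ) : Matrix (Fin (α (t a))) (Fin (α (t a))) ℂ) *
        ψ.val z⁻¹ (t a))) * T a
        = (z ^ (-mm) * z ^ (-(γ a))) • (ψ.val z (t a) *
            (((g (t a) : GL (Fin (α (t a))) ℂ) : Matrix (Fin (α (t a))) (Fin (α (t a))) ℂ) *
              (T a * ψ.val z⁻¹ (s a)))) := by
      rw [Matrix.smul_mul]
      simp only [Matrix.mul_assoc]
      rw [hcons]
      simp only [Matrix.mul_smul, smul_smul]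
    have rhs_eq : attAct s t α γ ψ z (bc s t α g T) a *
        (z ^ (-mm) • (ψ.val z (s a) *
          ((g (s a) : GL (Fin (α (s a))) ℂ) : Matrix (Fin (α (s a))) (Fin (α (s a))) ℂ) *
          ψ.val z⁻¹ (s a)))
        = (z ^ (-mm) * z ^ (-(γ a))) • (ψ.val z (t a) *
            (((g (t a) : GL (Fin (α (t a))) ℂ) : Matrix (Fin (α (t a))) (Fin (α (t a))) ℂ) *
              (T a * ψ.val z⁻¹ (s a)))) := by
      unfold attAct bc
      simp only [Matrix.smul_mul, Matrix.mul_smul, smul_smul, Matrix.mul_assoc]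
      rw [← Matrix.mul_assoc (ψ.val z⁻¹ (s a)) (ψ.val z (s a)), ψ.val_inv_mul hz,
        Matrix.one_mul,
        ← Matrix.mul_assoc (((g (s a))⁻¹ : GL (Fin (α (s a))) ℂ) :
            Matrix (Fin (α (s a))) (Fin (α (s a))) ℂ)
          ((g (s a) : GL (Fin (α (s a))) ℂ) : Matrix (Fin (α (s a))) (Fin (α (s a))) ℂ)
          (ψ.val z⁻¹ (s a)), hginv, Matrix.one_mul]
    rw [lhs_eq, rhs_eq]
  -- take limits on both sides
  have hattA : ∀ a, Tendsto (fun z : ℂ => attAct s t α γ ψ z (bc s t α g T) a)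
      (𝓝[≠] (0:ℂ)) (𝓝 (T a)) := fun a => (tendsto_pi_nhds.mp hg) a
  have hint : ∀ a, Pmat ψ g (t a) mm * T a = T a * Pmat ψ g (s a) mm := by
    intro a
    have hL : Tendsto (fun z : ℂ =>
        (z ^ (-mm) • (ψ.val z (t a) * ((g (t a) : GL _ ℂ) : Matrix _ _ ℂ) * ψ.val z⁻¹ (t a)))
          * T a) (𝓝[≠] (0:ℂ)) (𝓝 (Pmat ψ g (t a) mm * T a)) :=
      Tendsto.matrix_mul (hFq (t a)) tendsto_const_nhds
    have hR : Tendsto (fun z : ℂ => attAct s t α γ ψ z (bc s t α g T) a *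
        (z ^ (-mm) • (ψ.val z (s a) * ((g (s a) : GL _ ℂ) : Matrix _ _ ℂ) * ψ.val z⁻¹ (s a))))
        (𝓝[≠] (0:ℂ)) (𝓝 (T a * Pmat ψ g (s a) mm)) :=
      Tendsto.matrix_mul (hattA a) (hFq (s a))
    refine tendsto_nhds_unique (hL.congr' ?_) hR
    filter_upwards [self_mem_nhdsWithin] with z hz
    exact hid z hz a
  -- Schurian gives a scalar
  obtain ⟨c, hc⟩ := hT (fun q => Pmat ψ g q mm) hint
  -- transfer to Bmat: the weight-mm part of each B q is c • 1
  have hBd : ∀ q, Matrix.of (fun i j => if ψ.e q i - ψ.e q j = mm then Bmat ψ g q i j else 0)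
      = c • (1 : Matrix (Fin (α q)) (Fin (α q)) ℂ) := by
    intro q
    have h1 : (((ψ.h q)⁻¹ : GL (Fin (α q)) ℂ) : Matrix (Fin (α q)) (Fin (α q)) ℂ) *
        ((ψ.h q : GL (Fin (α q)) ℂ) : Matrix (Fin (α q)) (Fin (α q)) ℂ) = 1 := by
      rw [← Units.val_mul, inv_mul_cancel, Units.val_one]
    have hcq := hc q
    unfold Pmat at hcq
    calc Matrix.of (fun i j => if ψ.e q i - ψ.e q j = mm then Bmat ψ g q i j else 0)
        = (((ψ.h q)⁻¹ : GL (Fin (α q)) ℂ) : Matrix _ _ ℂ) *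
          (((ψ.h q : GL (Fin (α q)) ℂ) : Matrix _ _ ℂ) *
            Matrix.of (fun i j => if ψ.e q i - ψ.e q j = mm then Bmat ψ g q i j else 0) *
            (((ψ.h q)⁻¹ : GL (Fin (α q)) ℂ) : Matrix _ _ ℂ)) *
          ((ψ.h q : GL (Fin (α q)) ℂ) : Matrix _ _ ℂ) := by
          simp only [← Matrix.mul_assoc, h1, Matrix.one_mul]
          rw [Matrix.mul_assoc, h1, Matrix.mul_one]
      _ = (((ψ.h q)⁻¹ : GL (Fin (α q)) ℂ) : Matrix _ _ ℂ) * (c • 1) *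
          ((ψ.h q : GL (Fin (α q)) ℂ) : Matrix _ _ ℂ) := by rw [hcq]
      _ = c • (1 : Matrix (Fin (α q)) (Fin (α q)) ℂ) := by
          rw [Matrix.mul_smul, Matrix.mul_one, Matrix.smul_mul, h1]
  -- mm is attained: get c ≠ 0 and mm = 0
  obtain ⟨q0, -, hq0⟩ := Finset.mem_biUnion.mp hmK
  obtain ⟨p, hpmem, hpe⟩ := Finset.mem_image.mp hq0
  have hpB : Bmat ψ g q0 p.1 p.2 ≠ 0 := (Finset.mem_filter.mp hpmem).2
  have hentry : Matrix.of (fun i j => if ψ.e q0 i - ψ.e q0 j = mm then Bmat ψ g q0 i j else 0)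
      p.1 p.2 = (c • (1 : Matrix (Fin (α q0)) (Fin (α q0)) ℂ)) p.1 p.2 := by rw [hBd q0]
  rw [Matrix.of_apply, if_pos hpe, Matrix.smul_apply] at hentry
  have hp12 : p.1 = p.2 := by
    by_contra hne
    rw [Matrix.one_apply_ne hne, smul_zero] at hentry
    exact hpB hentry
  have hmm0 : mm = 0 := by rw [← hpe, hp12, sub_self]
  have hc0 : c ≠ 0 := by
    intro h0
    rw [h0, zero_smul] at hentry
    exact hpB hentry
  -- conclude
  refine ⟨c, hc0, fun q => ?_⟩
  have hFq' := hFq q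
  have heq : (fun z : ℂ => z ^ (-mm) •
      (ψ.val z q * ((g q : GL (Fin (α q)) ℂ) : Matrix _ _ ℂ) * ψ.val z⁻¹ q))
      = fun z : ℂ => ψ.val z q * ((g q : GL (Fin (α q)) ℂ) : Matrix _ _ ℂ) * ψ.val z⁻¹ q := by
    funext z; rw [hmm0, neg_zero, zpow_zero, one_smul]
  rw [heq, hc q] at hFq'
  exact hFq'

lemma T_mem_att (s t : A → V) (α : V → ℕ) (γ : A → ℤ) (T : RA s t α)
    (ψ : OneParam α) (hfix : FixedLift s t α γ ψ T) : T ∈ Att s t α γ ψ T := by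
  have : Tendsto (fun _ : ℂ => T) (𝓝[≠] (0:ℂ)) (𝓝 T) := tendsto_const_nhds
  refine this.congr' ?_
  filter_upwards [self_mem_nhdsWithin] with z hz
  funext a
  show T a = attAct s t α γ ψ z T a
  unfold attAct
  rw [hfix z hz a, smul_smul, ← zpow_add₀ hz, neg_add_cancel, zpow_zero, one_smul]

lemma bc_mem_att_of_upsi (s t : A → V) (α : V → ℕ) (γ : A → ℤ) (T : RA s t α)
    (ψ : OneParam α) (M : RA s t α) (hM : M ∈ Att s t α γ ψ T)
    (g : GLa α) (hg : g ∈ Upsi α ψ) : bc s t α g M ∈ Att s t α γ ψ T := by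
  obtain ⟨μ, hμ, hconv⟩ := hg
  -- convergence of the conjugates of g⁻¹
  have hinv : ∀ q, Tendsto (fun z : ℂ => ψ.val z q *
      (((g q)⁻¹ : GL (Fin (α q)) ℂ) : Matrix (Fin (α q)) (Fin (α q)) ℂ) * ψ.val z⁻¹ q)
      (𝓝[≠] (0:ℂ)) (𝓝 (μ⁻¹ • (1 : Matrix (Fin (α q)) (Fin (α q)) ℂ))) := by
    intro q
    have hdet : (μ • (1 : Matrix (Fin (α q)) (Fin (α q)) ℂ)).det ≠ 0 := by
      rw [Matrix.det_smul, Matrix.det_one, mul_one]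
      exact pow_ne_zero _ hμ
    have hcontinv : ContinuousAt Inv.inv (μ • (1 : Matrix (Fin (α q)) (Fin (α q)) ℂ)) := by
      refine continuousAt_matrix_inv _ ?_
      rw [Ring.inverse_eq_inv']
      exact continuousAt_inv₀ hdet
    have hmul : (μ • (1 : Matrix (Fin (α q)) (Fin (α q)) ℂ)) * (μ⁻¹ • 1) = 1 := by
      rw [Matrix.smul_mul, Matrix.one_mul, smul_smul, mul_inv_cancel₀ hμ, one_smul]
    have hval : (μ • (1 : Matrix (Fin (α q)) (Fin (α q)) ℂ))⁻¹ = μ⁻¹ • 1 :=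
      Matrix.inv_eq_right_inv hmul
    have h1 : Tendsto (fun z : ℂ =>
        (ψ.val z q * ((g q : GL (Fin (α q)) ℂ) : Matrix (Fin (α q)) (Fin (α q)) ℂ) *
          ψ.val z⁻¹ q)⁻¹) (𝓝[≠] (0:ℂ)) (𝓝 (μ⁻¹ • (1 : Matrix (Fin (α q)) (Fin (α q)) ℂ))) := by
      have := (hcontinv.tendsto).comp (hconv q)
      rwa [hval] at this
    refine h1.congr' ?_
    filter_upwards [self_mem_nhdsWithin] with z hz
    refine Matrix.inv_eq_right_inv ?_
    calc (ψ.val z q * ((g q : GL (Fin (α q)) ℂ) : Matrix _ _ ℂ) * ψ.val z⁻¹ q) *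
          (ψ.val z q * (((g q)⁻¹ : GL (Fin (α q)) ℂ) : Matrix _ _ ℂ) * ψ.val z⁻¹ q)
        = ψ.val z q * (((g q : GL (Fin (α q)) ℂ) : Matrix _ _ ℂ) *
            ((ψ.val z⁻¹ q * ψ.val z q) *
              ((((g q)⁻¹ : GL (Fin (α q)) ℂ) : Matrix _ _ ℂ) * ψ.val z⁻¹ q))) := by
          simp only [Matrix.mul_assoc]
      _ = 1 := by
          rw [ψ.val_inv_mul hz, Matrix.one_mul, ← Matrix.mul_assoc
            ((g q : GL (Fin (α q)) ℂ) : Matrix (Fin (α q)) (Fin (α q)) ℂ)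
            (((g q)⁻¹ : GL (Fin (α q)) ℂ) : Matrix (Fin (α q)) (Fin (α q)) ℂ),
            ← Units.val_mul, mul_inv_cancel, Units.val_one, Matrix.one_mul,
            ψ.mul_val_inv hz]
  -- the key identity
  have hid : ∀ (z : ℂ), z ≠ 0 → ∀ a, attAct s t α γ ψ z (bc s t α g M) a
      = (ψ.val z (t a) * ((g (t a) : GL (Fin (α (t a))) ℂ) :
          Matrix (Fin (α (t a))) (Fin (α (t a))) ℂ) * ψ.val z⁻¹ (t a))
        * attAct s t α γ ψ z M a *
        (ψ.val z (s a) * (((g (s a))⁻¹ : GL (Fin (α (s a))) ℂ) :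
          Matrix (Fin (α (s a))) (Fin (α (s a))) ℂ) * ψ.val z⁻¹ (s a)) := by
    intro z hz a
    unfold attAct bc
    simp only [Matrix.mul_assoc, Matrix.smul_mul, Matrix.mul_smul, smul_smul]
    rw [← Matrix.mul_assoc (ψ.val z⁻¹ (t a)) (ψ.val z (t a)), ψ.val_inv_mul hz,
      Matrix.one_mul, ← Matrix.mul_assoc (ψ.val z⁻¹ (s a)) (ψ.val z (s a)),
      ψ.val_inv_mul hz, Matrix.one_mul]
  -- limits
  refine tendsto_pi_nhds.mpr fun a => ?_
  have hlim : Tendsto (fun z : ℂ =>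
      (ψ.val z (t a) * ((g (t a) : GL (Fin (α (t a))) ℂ) :
          Matrix (Fin (α (t a))) (Fin (α (t a))) ℂ) * ψ.val z⁻¹ (t a))
        * attAct s t α γ ψ z M a *
        (ψ.val z (s a) * (((g (s a))⁻¹ : GL (Fin (α (s a))) ℂ) :
          Matrix (Fin (α (s a))) (Fin (α (s a))) ℂ) * ψ.val z⁻¹ (s a)))
      (𝓝[≠] (0:ℂ)) (𝓝 ((μ • (1 : Matrix (Fin (α (t a))) (Fin (α (t a))) ℂ)) * T a *
        (μ⁻¹ • (1 : Matrix (Fin (α (s a))) (Fin (α (s a))) ℂ)))) :=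
    Tendsto.matrix_mul (Tendsto.matrix_mul (hconv (t a)) (tendsto_pi_nhds.mp hM a)) (hinv (s a))
  have hval : (μ • (1 : Matrix (Fin (α (t a))) (Fin (α (t a))) ℂ)) * T a *
      (μ⁻¹ • (1 : Matrix (Fin (α (s a))) (Fin (α (s a))) ℂ)) = T a := by
    rw [Matrix.smul_mul, Matrix.one_mul, Matrix.mul_smul, Matrix.mul_one, smul_smul,
      inv_mul_cancel₀ hμ, one_smul]
  rw [hval] at hlim
  refine hlim.congr' ?_
  filter_upwards [self_mem_nhdsWithin] with z hz
  exact (hid z hz a).symm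

lemma stdform_entries (s t : A → V) (α : V → ℕ) (γ : A → ℤ) (T : RA s t α)
    (ψ : OneParam α) (hfix : FixedLift s t α γ ψ T) (hstd : StdForm α ψ)
    (M : RA s t α) (hM : M ∈ Att s t α γ ψ T) (a : A) (i : Fin (α (t a)))
    (j : Fin (α (s a))) (hTij : T a i j ≠ 0) : M a i j = T a i j := by
  -- step 1: the exponent identity e_{t,i} - e_{s,j} = γ a
  have h2 := hfix 2 two_ne_zero a
  rw [hstd 2 (t a), hstd 2⁻¹ (s a)] at h2
  have h3 : (Matrix.diagonal (fun i' => (2:ℂ) ^ ψ.e (t a) i') * T a *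
      Matrix.diagonal (fun j' => (2:ℂ)⁻¹ ^ ψ.e (s a) j')) i j
      = ((2:ℂ) ^ (γ a) • T a) i j := by rw [h2]
  rw [Matrix.mul_diagonal, Matrix.diagonal_mul, Matrix.smul_apply, smul_eq_mul,
    inv_zpow, ← zpow_neg] at h3
  have h4 : ((2:ℂ) ^ (ψ.e (t a) i) * (2:ℂ) ^ (-(ψ.e (s a) j))) * T a i j
      = (2:ℂ) ^ (γ a) * T a i j := by rw [← h3]; ring
  have h5 : (2:ℂ) ^ (ψ.e (t a) i + -(ψ.e (s a) j)) = (2:ℂ) ^ (γ a) := by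
    rw [zpow_add₀ (two_ne_zero)]
    exact mul_right_cancel₀ hTij h4
  have h6 : ‖(2:ℂ)‖ ^ (ψ.e (t a) i + -(ψ.e (s a) j)) = ‖(2:ℂ)‖ ^ (γ a) := by
    rw [← norm_zpow, ← norm_zpow, h5]
  have hnorm2 : ‖(2:ℂ)‖ = 2 := by
    rw [show ((2:ℂ)) = ((2:ℝ) : ℂ) by norm_num, Complex.norm_real]
    norm_num
  rw [hnorm2] at h6
  have deq : ψ.e (t a) i + -(ψ.e (s a) j) = γ a :=
    zpow_right_injective₀ (by norm_num : (0:ℝ) < 2) (by norm_num) h6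
  -- step 2: entry convergence
  have hatt := tendsto_pi_nhds.mp hM a
  have helem : Continuous (fun N : Matrix (Fin (α (t a))) (Fin (α (s a))) ℂ => N i j) :=
    Continuous.matrix_elem continuous_id i j
  have hent : Tendsto (fun z : ℂ => attAct s t α γ ψ z M a i j)
      (𝓝[≠] (0:ℂ)) (𝓝 (T a i j)) := (helem.tendsto (T a)).comp hatt
  have heq : (fun z : ℂ => attAct s t α γ ψ z M a i j) =ᶠ[𝓝[≠] (0:ℂ)]
      fun _ => M a i j := by
    filter_upwards [self_mem_nhdsWithin] with z hz
    show ((z ^ (-(γ a))) • (ψ.val z (t a) * M a * ψ.val z⁻¹ (s a))) i j = M a i j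
    rw [Matrix.smul_apply, hstd z (t a), hstd z⁻¹ (s a), Matrix.mul_diagonal,
      Matrix.diagonal_mul, smul_eq_mul, inv_zpow, ← zpow_neg]
    have hpow : z ^ (-(γ a)) * (z ^ (ψ.e (t a) i) * z ^ (-(ψ.e (s a) j))) = 1 := by
      rw [← zpow_add₀ hz, ← zpow_add₀ hz,
        show -(γ a) + (ψ.e (t a) i + -(ψ.e (s a) j)) = 0 by omega, zpow_zero]
    calc z ^ (-(γ a)) * (z ^ (ψ.e (t a) i) * M a i j * z ^ (-(ψ.e (s a) j)))
        = (z ^ (-(γ a)) * (z ^ (ψ.e (t a) i) * z ^ (-(ψ.e (s a) j)))) * M a i j := by ring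
      _ = M a i j := by rw [hpow, one_mul]
  exact tendsto_nhds_unique tendsto_const_nhds (hent.congr' heq)

end Main

end QuivC


open QuivC Filter
open scoped Topology

variable {V A : Type} [Fintype V] [Fintype A]

/-- Lemma `uaction`.  Let `T ∈ R_α(Q)` be Schurian with a
one-parameter subgroup `ψ` satisfying `ψ(z)∗T = z.T`.  Then (1) `U_ψ` preserves
`Att(T)`; (2) `g∗T ∈ Att(T)` iff `g ∈ U_ψ`; and (3) if `ψ` is in standard form then
for every `M ∈ Att(T)` the entries of `M` agree with those of `T` wherever the
latter are nonzero. -/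
theorem statement15 (s t : A → V) (α : V → ℕ) (γ : A → ℤ)
    (T : RA s t α) (hT : Schurian s t α T)
    (ψ : OneParam α) (hfix : FixedLift s t α γ ψ T) :
    (∀ M ∈ Att s t α γ ψ T, ∀ g ∈ Upsi α ψ, bc s t α g M ∈ Att s t α γ ψ T) ∧
    (∀ g : GLa α, bc s t α g T ∈ Att s t α γ ψ T ↔ g ∈ Upsi α ψ) ∧
    (StdForm α ψ →
      ∀ M ∈ Att s t α γ ψ T, ∀ (a : A) (i : Fin (α (t a))) (j : Fin (α (s a))),
        T a i j ≠ 0 → M a i j = T a i j) :=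
  ⟨fun M hM g hg => bc_mem_att_of_upsi s t α γ T ψ M hM g hg,
   fun g => ⟨fun h => upsi_of_bc_mem_att s t α γ T hT ψ hfix g h,
     fun hg => bc_mem_att_of_upsi s t α γ T ψ T (T_mem_att s t α γ T ψ hfix) g hg⟩,
   fun hstd M hM a i j hTij => stdform_entries s t α γ T ψ hfix hstd M hM a i j hTij⟩
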